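/- For every t with 0 ≤ t < 1/6, the derivative of a satisfies a′(t) = −(5·a(t)·d(t))/(2·q(t)·c(t)) − (6·a(t)²·z₂(t))/(q(t)·c(t)) − (2·a(t)·y(t))/q(t). -/

import Mathlib

noncomputable def pFun (t : ℝ) : ℝ := 1 - 6 * t

noncomputable def rFun (s t : ℝ) : ℝ := Real.exp (-(7776 / 25) * (1 - s) ^ 2 * t ^ 3)

noncomputable def qFun (t : ℝ) : ℝ := pFun t ^ 3 / 6

noncomputable def yFun (t : ℝ) : ℝ := pFun t ^ 2

noncomputable def aFun (s t : ℝ) : ℝ := (5 / 6) * s * (1 - s) ^ 2 * pFun t ^ 5 * rFun s t ^ 2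

noncomputable def c1Fun (s t : ℝ) : ℝ := (5 / 6) * s * (1 - s) * pFun t ^ 2 * rFun s t

noncomputable def c2Fun (s t : ℝ) : ℝ := (5 / 6) * (1 - s) ^ 2 * pFun t ^ 3 * rFun s t ^ 2

noncomputable def cFun (s t : ℝ) : ℝ := c1Fun s t * c2Fun s t

noncomputable def dFun (s t : ℝ) : ℝ := (5 / 6) * s * (1 - s) ^ 3 * pFun t ^ 7 * rFun s t ^ 3

noncomputable def z0Fun (s t : ℝ) : ℝ := (5 / 6) * (1 - s) ^ 5 * pFun t ^ 9 * rFun s t ^ 3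

noncomputable def z1Fun (s t : ℝ) : ℝ := (1 - s) ^ 4 * (1 - pFun t) * pFun t ^ 6 * rFun s t ^ 2

noncomputable def z2Fun (s t : ℝ) : ℝ :=
  (6 / 5) * (1 - s) ^ 3 * (1 - pFun t) ^ 2 * pFun t ^ 3 * rFun s t

set_option maxHeartbeats 1000000 in
theorem a_hasDerivAt (s : ℝ) (hs0 : 0 < s) (hs1 : s < 1) (t : ℝ)
    (ht0 : 0 ≤ t) (ht : t < 1 / 6) :
    HasDerivAt (aFun s)
      (-(5 * aFun s t * dFun s t) / (2 * qFun t * cFun s t)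
        - (6 * aFun s t ^ 2 * z2Fun s t) / (qFun t * cFun s t)
        - (2 * aFun s t * yFun t) / qFun t) t := by
  have hp : (0:ℝ) < pFun t := by unfold pFun; linarith
  have hpne : pFun t ≠ 0 := ne_of_gt hp
  have hrne : rFun s t ≠ 0 := Real.exp_ne_zero _
  have hsne : s ≠ 0 := ne_of_gt hs0
  have h1s : (1 - s) ≠ 0 := by linarith
  have hdp : HasDerivAt pFun (-6) t := by
    have := ((hasDerivAt_id t).const_mul (6:ℝ)).const_sub 1
    show HasDerivAt (fun x => 1 - 6 * x) (-6) t
    simpa using this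
  have hdr : HasDerivAt (rFun s)
      (rFun s t * (-(7776 / 25) * (1 - s) ^ 2 * (3 * t ^ 2))) t := by
    have hinner : HasDerivAt (fun u : ℝ => -(7776 / 25) * (1 - s) ^ 2 * u ^ 3)
        (-(7776 / 25) * (1 - s) ^ 2 * (3 * t ^ 2)) t :=
      (hasDerivAt_pow 3 t).const_mul (-(7776 / 25) * (1 - s) ^ 2)
    have h2 := hinner.exp
    have heq : rFun s = fun u : ℝ =>
        Real.exp (-(7776 / 25) * (1 - s) ^ 2 * u ^ 3) := by
      funext u; rfl
    rw [heq]
    convert h2 using 1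
  have h5 : HasDerivAt (fun u => pFun u ^ 5) (5 * pFun t ^ 4 * (-6)) t := by
    have := hdp.fun_pow 5
    convert! this using 1
  have h2 : HasDerivAt (fun u => rFun s u ^ 2)
      (2 * rFun s t * (rFun s t * (-(7776 / 25) * (1 - s) ^ 2 * (3 * t ^ 2)))) t := by
    have := hdr.fun_pow 2
    convert! this using 1
    norm_num
  have hda : HasDerivAt (aFun s)
      ((5 / 6) * s * (1 - s) ^ 2 *
        (5 * pFun t ^ 4 * (-6) * rFun s t ^ 2 +
          pFun t ^ 5 * (2 * rFun s t *
            (rFun s t * (-(7776 / 25) * (1 - s) ^ 2 * (3 * t ^ 2)))))) t := by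
    have h := (h5.fun_mul h2).const_mul ((5 / 6) * s * (1 - s) ^ 2)
    have heq : aFun s = fun u =>
        (5 / 6) * s * (1 - s) ^ 2 * (pFun u ^ 5 * rFun s u ^ 2) := by
      funext u; unfold aFun; ring
    rw [heq]
    convert h using 1
  convert hda using 1
  unfold aFun dFun qFun cFun c1Fun c2Fun z2Fun yFun
  have h1p : 1 - pFun t = 6 * t := by unfold pFun; ring
  rw [h1p]
  field_simp
  ring
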